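/- For any nonnegative integers w and b, not both zero, and any p ∈ (0,1), the minimum of the quadratic form μᵀ M μ over probability vectors μ on w+b vertices — where M has diagonal entries p on the first w coordinates (white vertices), diagonal entries 1−p on the last b coordinates (black vertices), and all off-diagonal entries 0 — equals (w/p + b/(1−p))⁻¹. -/

import Mathlib

open Finset

inductive EColor | white | black | gray
deriving DecidableEq

/-- The `p`-weight of an edge color: `p` for white, `1-p` for black, `0` for gray. -/
def wval (p : ℝ) : EColor → ℝ
  | .white => p
  | .black => 1 - p
  | .gray => 0

/-- The matrix `M_K(p)` of a CRG given by vertex colors `vb` (`true` = black)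
and edge colors `ec`. -/
def Mmat {V : Type*} [DecidableEq V] (vb : V → Bool) (ec : V → V → EColor) (p : ℝ)
    (x y : V) : ℝ :=
  if x = y then (if vb x then 1 - p else p) else wval p (ec x y)

/-- `μ` is a probability mass. -/
def IsProb {V : Type*} [Fintype V] (μ : V → ℝ) : Prop :=
  (∀ x, 0 ≤ μ x) ∧ ∑ x, μ x = 1

/-- The quadratic form `⟨μ, M_K(p) μ⟩`. -/
def QF {V : Type*} [Fintype V] [DecidableEq V] (vb : V → Bool) (ec : V → V → EColor)
    (p : ℝ) (μ : V → ℝ) : ℝ :=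
  ∑ x, ∑ y, μ x * Mmat vb ec p x y * μ y

/-- `g` is the minimum of the quadratic form over probability masses, i.e. `g = g_K(p)`. -/
def gIs {V : Type*} [Fintype V] [DecidableEq V] (vb : V → Bool) (ec : V → V → EColor)
    (p g : ℝ) : Prop :=
  IsLeast {t | ∃ μ : V → ℝ, IsProb μ ∧ t = QF vb ec p μ} g

/-- The weighted gray-degree `d_G(u) = ∑_{v : uv gray} μ(v)`. -/
def grayDeg {V : Type*} [Fintype V] [DecidableEq V] (ec : V → V → EColor) (μ : V → ℝ)
    (u : V) : ℝ :=
  ∑ v ∈ Finset.univ.filter (fun v => v ≠ u ∧ ec u v = EColor.gray), μ v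

/-- for the all-gray CRG `K(w,b)` (w white, b black vertices, all edges gray),
`g_{K(w,b)}(p) = (w/p + b/(1-p))⁻¹` for `p ∈ (0,1)`, whenever `w + b ≥ 1`. -/
theorem stmt0 (w b : ℕ) (hwb : 1 ≤ w + b) (p : ℝ) (hp0 : 0 < p) (hp1 : p < 1) :
    gIs (fun i : Fin (w + b) => decide (w ≤ i.val)) (fun _ _ => EColor.gray) p
      (((w : ℝ) / p + (b : ℝ) / (1 - p))⁻¹) := by
  have h1p : (0:ℝ) < 1 - p := by linarith
  set c : Fin (w+b) → ℝ := fun x => if w ≤ x.val then 1 - p else p with hc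
  have hcpos : ∀ x, 0 < c x := by
    intro x; by_cases h : w ≤ x.val <;> simp [hc, h] <;> linarith
  have hQF : ∀ μ : Fin (w+b) → ℝ,
      QF (fun i : Fin (w + b) => decide (w ≤ i.val)) (fun _ _ => EColor.gray) p μ
        = ∑ x, c x * μ x ^ 2 := by
    intro μ
    unfold QF
    refine Finset.sum_congr rfl fun x _ => ?_
    rw [Finset.sum_eq_single x]
    · by_cases h : w ≤ x.val <;> simp [Mmat, hc, h] <;> ring
    · intro y _ hy
      simp [Mmat, (Ne.symm hy : x ≠ y), wval]
    · simp
  have hSsum : ∑ x : Fin (w+b), (c x)⁻¹ = (w:ℝ)/p + (b:ℝ)/(1-p) := by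
    have : ∑ x : Fin (w+b), (c x)⁻¹
        = ∑ i ∈ Finset.range (w+b), (fun i : ℕ => (if w ≤ i then 1 - p else p)⁻¹) i :=
      Fin.sum_univ_eq_sum_range (fun i : ℕ => (if w ≤ i then 1 - p else p)⁻¹) (w+b)
    rw [this, Finset.range_eq_Ico, ← Finset.sum_Ico_consecutive _ (Nat.zero_le w) (Nat.le_add_right w b)]
    have h1 : ∑ i ∈ Finset.Ico 0 w, (fun i : ℕ => (if w ≤ i then 1 - p else p)⁻¹) i
        = (w : ℝ) * p⁻¹ := by
      have heq : ∀ i ∈ Finset.Ico 0 w,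
          (fun i : ℕ => (if w ≤ i then 1 - p else p)⁻¹) i = p⁻¹ := by
        intro i hi
        simp only [Finset.mem_Ico] at hi
        simp [Nat.not_le.mpr hi.2]
      rw [Finset.sum_congr rfl heq, Finset.sum_const, Nat.card_Ico, nsmul_eq_mul]
      simp
    have h2 : ∑ i ∈ Finset.Ico w (w+b), (fun i : ℕ => (if w ≤ i then 1 - p else p)⁻¹) i
        = (b : ℝ) * (1-p)⁻¹ := by
      have heq : ∀ i ∈ Finset.Ico w (w+b),
          (fun i : ℕ => (if w ≤ i then 1 - p else p)⁻¹) i = (1-p)⁻¹ := by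
        intro i hi
        simp only [Finset.mem_Ico] at hi
        simp [hi.1]
      rw [Finset.sum_congr rfl heq, Finset.sum_const, Nat.card_Ico, nsmul_eq_mul]
      simp
    rw [h1, h2, div_eq_mul_inv, div_eq_mul_inv]
  set S : ℝ := (w:ℝ)/p + (b:ℝ)/(1-p) with hSdef
  have hS : 0 < S := by
    rw [← hSsum]
    refine Finset.sum_pos (fun x _ => inv_pos.mpr (hcpos x)) ?_
    have : Nonempty (Fin (w+b)) := ⟨⟨0, hwb⟩⟩
    exact Finset.univ_nonempty
  constructor
  · refine ⟨fun x => (c x)⁻¹ / S, ⟨fun x => by positivity, ?_⟩, ?_⟩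
    · rw [← Finset.sum_div, hSsum, div_self hS.ne']
    · rw [hQF]
      have : ∀ x : Fin (w+b), c x * ((c x)⁻¹ / S) ^ 2 = (c x)⁻¹ / S ^ 2 := by
        intro x
        have := (hcpos x).ne'
        field_simp
      rw [Finset.sum_congr rfl (fun x _ => this x), ← Finset.sum_div, hSsum]
      rw [sq, div_mul_cancel_left₀ hS.ne']
  · rintro t ⟨μ, ⟨hμ0, hμ1⟩, rfl⟩
    rw [hQF]
    set Q : ℝ := ∑ x, c x * μ x ^ 2 with hQ
    have cauchy : (∑ x, μ x) ^ 2 ≤ (∑ x : Fin (w+b), (c x)⁻¹) * Q := by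
      refine Finset.sum_sq_le_sum_mul_sum_of_sq_eq_mul _
        (fun i _ => (inv_pos.mpr (hcpos i)).le)
        (fun i _ => mul_nonneg (hcpos i).le (sq_nonneg _)) (fun i _ => ?_)
      have := (hcpos i).ne'
      field_simp
    rw [hμ1, one_pow, hSsum] at cauchy
    have h2 : S * S⁻¹ ≤ S * Q := by
      rw [mul_inv_cancel₀ hS.ne']; exact cauchy
    exact le_of_mul_le_mul_left h2 hS
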